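/- Let σ₁ be an n×n and σ₂ an m×m complex positive definite matrix, let ρ₁, ρ₂ be nonzero positive semidefinite matrices of matching sizes, and let α > 0 with α ≠ 1 and z > 0. Define Q̃_{α,z}(ρ‖σ) := trace[((σ^{(1−α)/(2z)}) (ρ^{α/z}) (σ^{(1−α)/(2z)}))^z] and D̃_{α,z}(ρ‖σ) := (1/(α−1)) · log( Q̃_{α,z}(ρ‖σ) / trace ρ ). Then D̃_{α,z}(ρ₁ ⊗ₖ ρ₂ ‖ σ₁ ⊗ₖ σ₂) = D̃_{α,z}(ρ₁‖σ₁) + D̃_{α,z}(ρ₂‖σ₂). -/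

import Mathlib

open Matrix Kronecker ComplexOrder

/-- The `r`-th power of a complex square matrix, obtained via the (real) continuous
functional calculus applied to `t ↦ t ^ r` (real `rpow`, so that `0 ^ r = 0` for `r ≠ 0`). -/
noncomputable def matRpow {k : Type*} [Fintype k] [DecidableEq k]
    (A : Matrix k k ℂ) (r : ℝ) : Matrix k k ℂ :=
  cfc (fun x : ℝ => x ^ r) A

/-- The absolute value `|A| := (Aᴴ · A)^{1/2}` of a complex square matrix, where the square
root is taken via the continuous functional calculus. -/
noncomputable def matAbs {k : Type*} [Fintype k] [DecidableEq k]
    (A : Matrix k k ℂ) : Matrix k k ℂ :=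
  matRpow (Aᴴ * A) (1 / 2 : ℝ)

/-- The α-z-Rényi quantity `Q̃_{α,z}(ρ‖σ) = trace[((σ^{(1−α)/(2z)}) (ρ^{α/z}) (σ^{(1−α)/(2z)}))^z]`
(a real number, read off as the real part of the trace of a positive semidefinite matrix). -/
noncomputable def renyiQ {k : Type*} [Fintype k] [DecidableEq k]
    (α z : ℝ) (ρ σ : Matrix k k ℂ) : ℝ :=
  ((matRpow (matRpow σ ((1 - α) / (2 * z)) * matRpow ρ (α / z)
      * matRpow σ ((1 - α) / (2 * z))) z).trace).re

/-- The α-z-Rényi divergence `D̃_{α,z}(ρ‖σ) = (1/(α−1)) · log(Q̃_{α,z}(ρ‖σ) / trace ρ)`. -/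
noncomputable def renyiD {k : Type*} [Fintype k] [DecidableEq k]
    (α z : ℝ) (ρ σ : Matrix k k ℂ) : ℝ :=
  (1 / (α - 1)) * Real.log (renyiQ α z ρ σ / (ρ.trace).re)


namespace RenyiAux

variable {k : Type*} [Fintype k] [DecidableEq k]

lemma spectrum_conjDiag (U : Matrix.unitaryGroup k ℂ) (d : k → ℝ) :
    spectrum ℝ ((U : Matrix k k ℂ) * Matrix.diagonal (Complex.ofReal ∘ d)
      * star (U : Matrix k k ℂ)) = Set.range d := by
  rw [Unitary.spectrum_star_right_conjugate]
  ext x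
  rw [← spectrum.algebraMap_mem_iff ℂ, spectrum_diagonal]
  simp only [Set.mem_range, Function.comp_apply, Complex.coe_algebraMap,
    Complex.ofReal_inj]


lemma mem_spectrum_conjDiag (U : Matrix.unitaryGroup k ℂ) (d : k → ℝ) (i : k) :
    d i ∈ spectrum ℝ ((U : Matrix k k ℂ) * Matrix.diagonal (Complex.ofReal ∘ d)
      * star (U : Matrix k k ℂ)) := by
  rw [spectrum_conjDiag]; exact Set.mem_range_self i

/-- Auxiliary star algebra homomorphism realizing the continuous functional calculus of a
unitary-conjugated real diagonal matrix. -/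
noncomputable def conjDiagAux (U : Matrix.unitaryGroup k ℂ) (d : k → ℝ) :
    C(spectrum ℝ ((U : Matrix k k ℂ) * Matrix.diagonal (Complex.ofReal ∘ d)
      * star (U : Matrix k k ℂ)), ℝ) →⋆ₐ[ℝ] Matrix k k ℂ where
  toFun g := (U : Matrix k k ℂ) *
      Matrix.diagonal (Complex.ofReal ∘ g ∘ fun i => ⟨d i, mem_spectrum_conjDiag U d i⟩)
      * star (U : Matrix k k ℂ)
  map_one' := by
    simp only [Pi.one_def (M := fun _ : k ↦ ℂ), ContinuousMap.coe_one, Function.comp_def,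
      Pi.one_apply, Complex.ofReal_one, Matrix.diagonal_one, mul_one]
    exact Unitary.mul_star_self_of_mem (SetLike.coe_mem U)
  map_mul' f g := by
    have key {a b c d e f : Matrix k k ℂ} : (a * b * c) * (d * e * f) = a * (b * (c * d) * e) * f := by
      simp only [mul_assoc]
    simp only [key, ContinuousMap.coe_mul, SetLike.coe_mem, Unitary.star_mul_self_of_mem, mul_one,
      Matrix.diagonal_mul_diagonal, Function.comp_apply]
    congr! with i
    simp
  map_zero' := by
    simp only [Pi.zero_def (M := fun _ : k ↦ ℂ), ContinuousMap.coe_zero, Function.comp_def,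
      Pi.zero_apply, Complex.ofReal_zero, Matrix.diagonal_zero, mul_zero, zero_mul]
  map_add' f g := by
    simp only [ContinuousMap.coe_add, ← add_mul, ← mul_add, Matrix.diagonal_add,
      Function.comp_apply]
    congr! with i
    simp
  commutes' r := by
    simp only [Function.comp_def, algebraMap_apply, smul_eq_mul, mul_one]
    rw [← mul_one (algebraMap _ _ _), ← Unitary.coe_mul_star_self U,
      ← Algebra.left_comm, Unitary.coe_star, mul_assoc]
    congr!
  map_star' f := by
    simp only [star_trivial, StarMul.star_mul, star_star, Matrix.star_eq_conjTranspose (Matrix.diagonal _),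
      Matrix.diagonal_conjTranspose, mul_assoc]
    congr!
    ext
    simp


lemma isSelfAdjoint_conjDiag (U : Matrix.unitaryGroup k ℂ) (d : k → ℝ) :
    IsSelfAdjoint ((U : Matrix k k ℂ) * Matrix.diagonal (Complex.ofReal ∘ d)
      * star (U : Matrix k k ℂ)) := by
  have hd : star (Matrix.diagonal (Complex.ofReal ∘ d)) = Matrix.diagonal (Complex.ofReal ∘ d) := by
    rw [Matrix.star_eq_conjTranspose, Matrix.diagonal_conjTranspose]
    congr! with i
    funext i
    simp [Pi.star_def]
  show star _ = _
  rw [StarMul.star_mul, StarMul.star_mul, star_star, hd, mul_assoc]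

lemma continuous_conjDiagAux (U : Matrix.unitaryGroup k ℂ) (d : k → ℝ) :
    Continuous (conjDiagAux U d) := by
  have h1 : Continuous fun g : C(spectrum ℝ ((U : Matrix k k ℂ)
      * Matrix.diagonal (Complex.ofReal ∘ d) * star (U : Matrix k k ℂ)), ℝ) =>
      Matrix.diagonal (Complex.ofReal ∘ g ∘ fun i => ⟨d i, mem_spectrum_conjDiag U d i⟩) := by
    apply continuous_matrix
    intro i j
    by_cases h : i = j
    · subst h
      simp only [Matrix.diagonal_apply_eq, Function.comp_apply]
      exact Complex.continuous_ofReal.comp (continuous_eval_const _)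
    · simp only [Matrix.diagonal_apply_ne _ h]
      exact continuous_const
  exact (continuous_const.matrix_mul h1).matrix_mul continuous_const

lemma cfc_conjDiag (U : Matrix.unitaryGroup k ℂ) (d : k → ℝ) (f : ℝ → ℝ) :
    cfc f ((U : Matrix k k ℂ) * Matrix.diagonal (Complex.ofReal ∘ d) * star (U : Matrix k k ℂ))
      = (U : Matrix k k ℂ) * Matrix.diagonal (Complex.ofReal ∘ f ∘ d)
        * star (U : Matrix k k ℂ) := by
  have hsa := isSelfAdjoint_conjDiag U d
  have hid : conjDiagAux U d (ContinuousMap.restrict _ (ContinuousMap.id ℝ)) =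
      (U : Matrix k k ℂ) * Matrix.diagonal (Complex.ofReal ∘ d) * star (U : Matrix k k ℂ) := rfl
  have key := cfcHom_eq_of_continuous_of_map_id hsa (conjDiagAux U d)
    (continuous_conjDiagAux U d) hid
  rw [cfc_apply f _ hsa (by rw [continuousOn_iff_continuous_restrict]; fun_prop), key]
  rfl


lemma ofReal_eq : (RCLike.ofReal : ℝ → ℂ) = Complex.ofReal := rfl

/-- `cfc` of a Hermitian matrix via its eigendecomposition. -/
lemma cfc_of_isHermitian {A : Matrix k k ℂ} (hA : A.IsHermitian) (f : ℝ → ℝ) :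
    cfc f A = (hA.eigenvectorUnitary : Matrix k k ℂ)
      * Matrix.diagonal (Complex.ofReal ∘ f ∘ hA.eigenvalues)
      * star (hA.eigenvectorUnitary : Matrix k k ℂ) := by
  conv_lhs => rw [hA.spectral_theorem, ofReal_eq]
  exact cfc_conjDiag hA.eigenvectorUnitary hA.eigenvalues f

lemma trace_conjDiag (U : Matrix.unitaryGroup k ℂ) (v : k → ℂ) :
    ((U : Matrix k k ℂ) * Matrix.diagonal v * star (U : Matrix k k ℂ)).trace = ∑ i, v i := by
  rw [Matrix.trace_mul_cycle, Unitary.star_mul_self_of_mem (SetLike.coe_mem U), one_mul,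
    Matrix.trace_diagonal]

variable {k' : Type*} [Fintype k'] [DecidableEq k']

lemma star_kronecker (A : Matrix k k ℂ) (B : Matrix k' k' ℂ) :
    star (A ⊗ₖ B) = star A ⊗ₖ star B := by
  ext ⟨i, j⟩ ⟨i', j'⟩
  simp [Matrix.star_apply, Matrix.kroneckerMap_apply, star_mul']

lemma kron_mem_unitary (U : Matrix.unitaryGroup k ℂ) (V : Matrix.unitaryGroup k' ℂ) :
    (U : Matrix k k ℂ) ⊗ₖ (V : Matrix k' k' ℂ) ∈ Matrix.unitaryGroup (k × k') ℂ := by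
  rw [Matrix.mem_unitaryGroup_iff, star_kronecker, ← Matrix.mul_kronecker_mul,
    Unitary.mul_star_self_of_mem (SetLike.coe_mem U),
    Unitary.mul_star_self_of_mem (SetLike.coe_mem V), Matrix.one_kronecker_one]


lemma spectral_theorem' {A : Matrix k k ℂ} (hA : A.IsHermitian) :
    A = (hA.eigenvectorUnitary : Matrix k k ℂ)
      * Matrix.diagonal (Complex.ofReal ∘ hA.eigenvalues)
      * star (hA.eigenvectorUnitary : Matrix k k ℂ) :=
  hA.spectral_theorem

lemma kron_conjDiag (U₁ : Matrix.unitaryGroup k ℂ) (U₂ : Matrix.unitaryGroup k' ℂ)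
    (v₁ : k → ℝ) (v₂ : k' → ℝ) :
    ((U₁ : Matrix k k ℂ) * Matrix.diagonal (Complex.ofReal ∘ v₁) * star (U₁ : Matrix k k ℂ))
      ⊗ₖ ((U₂ : Matrix k' k' ℂ) * Matrix.diagonal (Complex.ofReal ∘ v₂)
        * star (U₂ : Matrix k' k' ℂ))
    = ((⟨(U₁ : Matrix k k ℂ) ⊗ₖ (U₂ : Matrix k' k' ℂ), kron_mem_unitary U₁ U₂⟩ :
        Matrix.unitaryGroup (k × k') ℂ) : Matrix (k × k') (k × k') ℂ)
      * Matrix.diagonal (Complex.ofReal ∘ fun p : k × k' => v₁ p.1 * v₂ p.2)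
      * star ((⟨(U₁ : Matrix k k ℂ) ⊗ₖ (U₂ : Matrix k' k' ℂ), kron_mem_unitary U₁ U₂⟩ :
          Matrix.unitaryGroup (k × k') ℂ) : Matrix (k × k') (k × k') ℂ) := by
  rw [Matrix.mul_kronecker_mul, Matrix.mul_kronecker_mul]
  show _ = _ * _ * star ((U₁ : Matrix k k ℂ) ⊗ₖ (U₂ : Matrix k' k' ℂ))
  rw [star_kronecker, Matrix.diagonal_kronecker_diagonal]
  congr 1
  congr 1
  ext p q
  rcases eq_or_ne p q with h | h
  · subst h; simp [Matrix.diagonal_apply_eq, Complex.ofReal_mul]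
  · simp [Matrix.diagonal_apply_ne _ h]

lemma matRpow_kronecker {A : Matrix k k ℂ} {B : Matrix k' k' ℂ}
    (hA : A.PosSemidef) (hB : B.PosSemidef) (r : ℝ) :
    matRpow (A ⊗ₖ B) r = matRpow A r ⊗ₖ matRpow B r := by
  have hAB : A ⊗ₖ B =
      ((⟨(hA.1.eigenvectorUnitary : Matrix k k ℂ) ⊗ₖ (hB.1.eigenvectorUnitary : Matrix k' k' ℂ),
          kron_mem_unitary _ _⟩ : Matrix.unitaryGroup (k × k') ℂ) : Matrix (k × k') (k × k') ℂ)
        * Matrix.diagonal (Complex.ofReal ∘ fun p : k × k' =>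
            hA.1.eigenvalues p.1 * hB.1.eigenvalues p.2)
        * star ((⟨(hA.1.eigenvectorUnitary : Matrix k k ℂ)
            ⊗ₖ (hB.1.eigenvectorUnitary : Matrix k' k' ℂ),
            kron_mem_unitary _ _⟩ : Matrix.unitaryGroup (k × k') ℂ) : Matrix (k × k') (k × k') ℂ) := by
    conv_lhs => rw [spectral_theorem' hA.1, spectral_theorem' hB.1]
    exact kron_conjDiag hA.1.eigenvectorUnitary hB.1.eigenvectorUnitary hA.1.eigenvalues
      hB.1.eigenvalues
  rw [matRpow, matRpow, matRpow, cfc_of_isHermitian hA.1, cfc_of_isHermitian hB.1,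
    kron_conjDiag, hAB, cfc_conjDiag]
  congr 1
  congr 1
  ext p q
  rcases eq_or_ne p q with h | h
  · subst h
    simp only [Matrix.diagonal_apply_eq, Function.comp_apply, Complex.ofReal_inj]
    exact Real.mul_rpow (hA.eigenvalues_nonneg p.1) (hB.eigenvalues_nonneg p.2)
  · simp [Matrix.diagonal_apply_ne _ h]


lemma matRpow_posSemidef {A : Matrix k k ℂ} (hA : A.PosSemidef) (r : ℝ) :
    (matRpow A r).PosSemidef := by
  rw [matRpow, cfc_of_isHermitian hA.1, Matrix.star_eq_conjTranspose]
  refine Matrix.PosSemidef.mul_mul_conjTranspose_same ?_ _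
  refine Matrix.posSemidef_diagonal_iff.mpr fun i => ?_
  simp only [Function.comp_apply]
  rw [Complex.zero_le_real]
  exact Real.rpow_nonneg (hA.eigenvalues_nonneg i) r

lemma trace_matRpow {A : Matrix k k ℂ} (hA : A.PosSemidef) (r : ℝ) :
    (matRpow A r).trace = Complex.ofReal (∑ i, hA.1.eigenvalues i ^ r) := by
  rw [matRpow, cfc_of_isHermitian hA.1, trace_conjDiag]
  push_cast
  rfl

lemma trace_posSemidef {A : Matrix k k ℂ} (hA : A.PosSemidef) :
    A.trace = Complex.ofReal (∑ i, hA.1.eigenvalues i) := by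
  conv_lhs => rw [spectral_theorem' hA.1]
  rw [trace_conjDiag]
  push_cast
  rfl

lemma exists_pos_eigenvalue {A : Matrix k k ℂ} (hA : A.PosSemidef) (h0 : A ≠ 0) :
    ∃ i, 0 < hA.1.eigenvalues i := by
  by_contra h
  push_neg at h
  apply h0
  have hz : ∀ i, hA.1.eigenvalues i = 0 := fun i => le_antisymm (h i) (hA.eigenvalues_nonneg i)
  conv_lhs => rw [spectral_theorem' hA.1]
  have : Complex.ofReal ∘ hA.1.eigenvalues = fun _ => (0 : ℂ) := by
    funext i; simp [hz i]
  rw [this]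
  simp [Matrix.diagonal_zero]

lemma sum_rpow_pos {A : Matrix k k ℂ} (hA : A.PosSemidef) (h0 : A ≠ 0) (r : ℝ) :
    0 < ∑ i, hA.1.eigenvalues i ^ r := by
  obtain ⟨i, hi⟩ := exists_pos_eigenvalue hA h0
  refine Finset.sum_pos' (fun j _ => Real.rpow_nonneg (hA.eigenvalues_nonneg j) r)
    ⟨i, Finset.mem_univ i, Real.rpow_pos_of_pos hi r⟩

lemma matRpow_ne_zero {A : Matrix k k ℂ} (hA : A.PosSemidef) (h0 : A ≠ 0) (r : ℝ) :
    matRpow A r ≠ 0 := by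
  intro h
  have ht := trace_matRpow hA r
  rw [h, Matrix.trace_zero] at ht
  have := sum_rpow_pos hA h0 r
  have : (0:ℝ) < 0 := by
    conv_rhs => rw [show (0:ℝ) = (Complex.ofReal (∑ i, hA.1.eigenvalues i ^ r)).re from by
      rw [← ht]; simp]
    simpa using this
  exact lt_irrefl _ this

lemma isUnit_det_matRpow {A : Matrix k k ℂ} (hA : A.PosDef) (r : ℝ) :
    IsUnit (matRpow A r).det := by
  rw [matRpow, cfc_of_isHermitian hA.1, Matrix.det_mul, Matrix.det_mul]
  have hU : (hA.1.eigenvectorUnitary : Matrix k k ℂ).det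
      * (star (hA.1.eigenvectorUnitary : Matrix k k ℂ)).det = 1 := by
    rw [← Matrix.det_mul, Unitary.mul_star_self_of_mem (SetLike.coe_mem _), Matrix.det_one]
  rw [mul_comm ((hA.1.eigenvectorUnitary : Matrix k k ℂ).det), mul_assoc, hU, mul_one,
    Matrix.det_diagonal]
  refine isUnit_iff_ne_zero.mpr (Finset.prod_ne_zero_iff.mpr fun i _ => ?_)
  simp only [Function.comp_apply, ne_eq, Complex.ofReal_eq_zero]
  exact ne_of_gt (Real.rpow_pos_of_pos (hA.eigenvalues_pos i) r)


lemma inner_posSemidef {σ ρ : Matrix k k ℂ} (hσ : σ.PosDef) (hρ : ρ.PosSemidef) (s a : ℝ) :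
    (matRpow σ s * matRpow ρ a * matRpow σ s).PosSemidef := by
  have hS := matRpow_posSemidef hσ.posSemidef s
  have h := (matRpow_posSemidef hρ a).mul_mul_conjTranspose_same (matRpow σ s)
  rwa [hS.1] at h

lemma inner_ne_zero {σ ρ : Matrix k k ℂ} (hσ : σ.PosDef) (hρ : ρ.PosSemidef) (h0 : ρ ≠ 0)
    (s a : ℝ) : matRpow σ s * matRpow ρ a * matRpow σ s ≠ 0 := by
  intro h
  set S := matRpow σ s with hSdef
  set R := matRpow ρ a with hRdef
  have hdet := isUnit_det_matRpow hσ s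
  have e1 : S⁻¹ * S = 1 := Matrix.nonsing_inv_mul _ hdet
  have e2 : S * S⁻¹ = 1 := Matrix.mul_nonsing_inv _ hdet
  have key : S⁻¹ * (S * R * S) * S⁻¹ = R := by
    have h3 : S⁻¹ * (S * R * S) * S⁻¹ = (S⁻¹ * S) * (R * (S * S⁻¹)) := by
      simp only [mul_assoc]
    rw [h3, e1, e2, one_mul, mul_one]
  apply matRpow_ne_zero hρ h0 a
  rw [hRdef] at key
  rw [← key, h, mul_zero, zero_mul]

lemma renyiQ_pos {σ ρ : Matrix k k ℂ} (hσ : σ.PosDef) (hρ : ρ.PosSemidef) (h0 : ρ ≠ 0)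
    (α z : ℝ) : 0 < renyiQ α z ρ σ := by
  have hN := inner_posSemidef hσ hρ ((1 - α) / (2 * z)) (α / z)
  have hN0 := inner_ne_zero hσ hρ h0 ((1 - α) / (2 * z)) (α / z)
  rw [renyiQ, trace_matRpow hN]
  simpa using sum_rpow_pos hN hN0 z

lemma trace_re_pos {ρ : Matrix k k ℂ} (hρ : ρ.PosSemidef) (h0 : ρ ≠ 0) :
    0 < (ρ.trace).re := by
  rw [trace_posSemidef hρ]
  obtain ⟨i, hi⟩ := exists_pos_eigenvalue hρ h0
  simpa using Finset.sum_pos' (fun j _ => hρ.eigenvalues_nonneg j) ⟨i, Finset.mem_univ i, hi⟩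

lemma renyiQ_kron {σ₁ ρ₁ : Matrix k k ℂ} {σ₂ ρ₂ : Matrix k' k' ℂ}
    (hσ₁ : σ₁.PosDef) (hσ₂ : σ₂.PosDef) (hρ₁ : ρ₁.PosSemidef) (hρ₂ : ρ₂.PosSemidef)
    (α z : ℝ) :
    renyiQ α z (ρ₁ ⊗ₖ ρ₂) (σ₁ ⊗ₖ σ₂) = renyiQ α z ρ₁ σ₁ * renyiQ α z ρ₂ σ₂ := by
  have hN₁ := inner_posSemidef hσ₁ hρ₁ ((1 - α) / (2 * z)) (α / z)
  have hN₂ := inner_posSemidef hσ₂ hρ₂ ((1 - α) / (2 * z)) (α / z)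
  rw [renyiQ, renyiQ, renyiQ,
    matRpow_kronecker hσ₁.posSemidef hσ₂.posSemidef, matRpow_kronecker hρ₁ hρ₂,
    ← Matrix.mul_kronecker_mul, ← Matrix.mul_kronecker_mul,
    matRpow_kronecker hN₁ hN₂, Matrix.trace_kronecker, trace_matRpow hN₁, trace_matRpow hN₂,
    ← Complex.ofReal_mul]
  simp

end RenyiAux

/-- Additivity of the α-z-Rényi divergence under Kronecker products, in the faithful
(positive definite `σᵢ`) finite-dimensional case. -/
theorem renyiD_additive {n m : ℕ}
    (σ₁ : Matrix (Fin n) (Fin n) ℂ) (σ₂ : Matrix (Fin m) (Fin m) ℂ)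
    (ρ₁ : Matrix (Fin n) (Fin n) ℂ) (ρ₂ : Matrix (Fin m) (Fin m) ℂ)
    (hσ₁ : σ₁.PosDef) (hσ₂ : σ₂.PosDef) (hρ₁ : ρ₁.PosSemidef) (hρ₂ : ρ₂.PosSemidef)
    (hρ₁0 : ρ₁ ≠ 0) (hρ₂0 : ρ₂ ≠ 0)
    (α z : ℝ) (hα₀ : 0 < α) (hα₁ : α ≠ 1) (hz : 0 < z) :
    renyiD α z (ρ₁ ⊗ₖ ρ₂) (σ₁ ⊗ₖ σ₂) = renyiD α z ρ₁ σ₁ + renyiD α z ρ₂ σ₂ := by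
  classical
  open RenyiAux in
  have hQ1 := renyiQ_pos hσ₁ hρ₁ hρ₁0 α z
  have hQ2 := renyiQ_pos hσ₂ hρ₂ hρ₂0 α z
  have ht1 := trace_re_pos hρ₁ hρ₁0
  have ht2 := trace_re_pos hρ₂ hρ₂0
  have htk : ((ρ₁ ⊗ₖ ρ₂).trace).re = (ρ₁.trace).re * (ρ₂.trace).re := by
    rw [Matrix.trace_kronecker, trace_posSemidef hρ₁, trace_posSemidef hρ₂,
      ← Complex.ofReal_mul]
    simp
  rw [renyiD, renyiD, renyiD, renyiQ_kron hσ₁ hσ₂ hρ₁ hρ₂ α z, htk,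
    mul_div_mul_comm, Real.log_mul (ne_of_gt (div_pos hQ1 ht1)) (ne_of_gt (div_pos hQ2 ht2)),
    mul_add]
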